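/- Let ε and ε⋆ be Hermitian involutions with trace ε = 2ν and trace ε⋆ = 2ν⋆, and let P₀⁺ be the orthogonal projection onto the kernel of Δ⁺ = 1 + εε⋆. Then trace(ε P₀⁺) = ν − ν⋆. -/

import Mathlib

open Matrix

/-- If ε and ε⋆ are Hermitian involutions on ℂ^(2N) with traces 2ν and 2ν⋆, and
P₀⁺ is the orthogonal projection onto the kernel of Δ⁺ = 1 + εε⋆, then
trace(ε P₀⁺) = ν − ν⋆. -/
theorem stmt13 {N : ℕ} (ε εs P₀ : Matrix (Fin (2 * N)) (Fin (2 * N)) ℂ)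
    (hεH : εᴴ = ε) (hε2 : ε * ε = 1)
    (hεsH : εsᴴ = εs) (hεs2 : εs * εs = 1)
    (ν νs : ℤ) (htr : ε.trace = (2 * ν : ℤ)) (htrs : εs.trace = (2 * νs : ℤ))
    (hPidem : P₀ * P₀ = P₀) (hPherm : P₀ᴴ = P₀)
    (hPrange : LinearMap.range P₀.mulVecLin = LinearMap.ker (1 + ε * εs).mulVecLin) :
    (ε * P₀).trace = (ν - νs : ℤ) := by
  set S : Matrix (Fin (2 * N)) (Fin (2 * N)) ℂ := ε + εs with hSdef
  set D : Matrix (Fin (2 * N)) (Fin (2 * N)) ℂ := ε - εs with hDdef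
  have hεS : ε * (1 + ε * εs) = S := by
    rw [mul_add, mul_one, ← mul_assoc, hε2, one_mul]
  have hεΔ : ε * S = 1 + ε * εs := by
    rw [hSdef, mul_add, hε2]
  -- Δ * P₀ = 0 since columns of P₀ lie in ker Δ
  have hΔP : (1 + ε * εs) * P₀ = 0 := by
    ext i j
    have hmem : P₀ *ᵥ Pi.single j 1 ∈ LinearMap.range P₀.mulVecLin :=
      ⟨Pi.single j 1, rfl⟩
    rw [hPrange, LinearMap.mem_ker] at hmem
    have h0 : (1 + ε * εs) *ᵥ (P₀ *ᵥ Pi.single j 1) = 0 := hmem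
    have := congrFun h0 i
    rw [mulVec_mulVec, Matrix.mulVec_single_one, Matrix.col_apply] at this
    exact this
  have hSP : S * P₀ = 0 := by
    rw [← hεS, mul_assoc, hΔP, mul_zero]
  have hPS : P₀ * S = 0 := by
    have hSH : Sᴴ = S := by rw [hSdef, conjTranspose_add, hεH, hεsH]
    have := congrArg conjTranspose hSP
    rwa [conjTranspose_mul, hPherm, hSH, conjTranspose_zero] at this
  have hSH : S.IsHermitian := by
    rw [Matrix.IsHermitian, hSdef, conjTranspose_add, hεH, hεsH]
  -- anticommutation S D = - D S
  have hanti : S * D + D * S = 0 := by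
    rw [hSdef, hDdef]
    simp only [mul_add, add_mul, mul_sub, sub_mul, hε2, hεs2]
    abel
  -- spectral data
  set V : Matrix (Fin (2 * N)) (Fin (2 * N)) ℂ := ((hSH.eigenvectorUnitary : unitaryGroup (Fin (2 * N)) ℂ) : Matrix (Fin (2 * N)) (Fin (2 * N)) ℂ)
    with hVdef
  have hVV : V * Vᴴ = 1 := Matrix.mem_unitaryGroup_iff.mp (hSH.eigenvectorUnitary).2
  have hVV' : Vᴴ * V = 1 := Matrix.mem_unitaryGroup_iff'.mp (hSH.eigenvectorUnitary).2
  set Λ : Matrix (Fin (2 * N)) (Fin (2 * N)) ℂ :=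
    diagonal (fun i => (hSH.eigenvalues i : ℂ)) with hΛdef
  have hspec : S = V * Λ * Vᴴ := by
    have := hSH.spectral_theorem
    convert this using 2
    rw [Unitary.conjStarAlgAut_apply]; rfl
  have hΛeq : Λ = Vᴴ * S * V := by
    rw [hspec]
    rw [mul_assoc, mul_assoc, hVV', mul_one, ← mul_assoc, hVV', one_mul]
  set M : Matrix (Fin (2 * N)) (Fin (2 * N)) ℂ := Vᴴ * D * V with hMdef
  set P' : Matrix (Fin (2 * N)) (Fin (2 * N)) ℂ := Vᴴ * P₀ * V with hP'def
  -- Λ M + M Λ = 0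
  have hMΛ : Λ * M + M * Λ = 0 := by
    rw [hΛeq, hMdef]
    have : Vᴴ * S * V * (Vᴴ * D * V) + Vᴴ * D * V * (Vᴴ * S * V)
        = Vᴴ * (S * D + D * S) * V := by
      simp only [mul_add, add_mul, mul_assoc]
      rw [← mul_assoc V Vᴴ, hVV, one_mul, ← mul_assoc V Vᴴ, hVV, one_mul]
    rw [this, hanti, mul_zero, zero_mul]
  -- diagonal entries of M vanish off ker
  have hMdiag : ∀ i, hSH.eigenvalues i ≠ 0 → M i i = 0 := by
    intro i hi
    have := congrFun (congrFun hMΛ i) i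
    simp only [Matrix.add_apply, hΛdef, Matrix.diagonal_mul, Matrix.mul_diagonal,
      Matrix.zero_apply] at this
    have hlam : (hSH.eigenvalues i : ℂ) ≠ 0 := by exact_mod_cast hi
    have h3 : (hSH.eigenvalues i : ℂ) * M i i = 0 := by linear_combination this / 2
    exact (mul_eq_zero.mp h3).resolve_left hlam
  -- P' Λ = 0
  have hP'Λ : P' * Λ = 0 := by
    rw [hP'def, hΛeq]
    calc Vᴴ * P₀ * V * (Vᴴ * S * V) = Vᴴ * (P₀ * S) * V := by
          simp only [mul_assoc]
          rw [← mul_assoc V Vᴴ, hVV, one_mul]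
      _ = 0 := by rw [hPS, mul_zero, zero_mul]
  have hP'col : ∀ j, hSH.eigenvalues j = 0 → ∀ k, P' k j = if k = j then 1 else 0 := by
    intro j hj k
    have hv : S *ᵥ ⇑(hSH.eigenvectorBasis j) = 0 := by
      rw [hSH.mulVec_eigenvectorBasis, hj]; simp
    have hΔv : (1 + ε * εs) *ᵥ ⇑(hSH.eigenvectorBasis j) = 0 := by
      rw [← hεΔ, ← mulVec_mulVec, hv, mulVec_zero]
    have hmem : ⇑(hSH.eigenvectorBasis j) ∈ LinearMap.range P₀.mulVecLin := by
      rw [hPrange, LinearMap.mem_ker]; exact hΔv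
    obtain ⟨w, hw⟩ := hmem
    have hPv : P₀ *ᵥ ⇑(hSH.eigenvectorBasis j) = ⇑(hSH.eigenvectorBasis j) := by
      rw [← hw]
      show P₀ *ᵥ (P₀ *ᵥ w) = P₀ *ᵥ w
      rw [mulVec_mulVec, hPidem]
    have hcol : P' *ᵥ Pi.single j 1 = Pi.single j 1 := by
      have h1 : V *ᵥ Pi.single j 1 = ⇑(hSH.eigenvectorBasis j) :=
        hSH.eigenvectorUnitary_mulVec j
      have h2 : Vᴴ *ᵥ ⇑(hSH.eigenvectorBasis j) = Pi.single j 1 := by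
        rw [← Matrix.star_eq_conjTranspose]
        exact hSH.star_eigenvectorUnitary_mulVec j
      rw [hP'def, ← mulVec_mulVec, ← mulVec_mulVec, h1, hPv, h2]
    have := congrFun hcol k
    simp only [Matrix.mulVec_single_one, Matrix.col_apply] at this
    rw [this, Pi.single_apply]
  -- trace M = trace (M * P')
  have htrM : M.trace = (M * P').trace := by
    rw [Matrix.trace, Matrix.trace]
    apply Finset.sum_congr rfl
    intro j _
    simp only [Matrix.diag_apply, Matrix.mul_apply]
    by_cases hj : hSH.eigenvalues j = 0
    · rw [Finset.sum_congr rfl (fun k _ => by rw [hP'col j hj k])]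
      simp
    · have hzero : ∀ k, P' k j = 0 := by
        intro k
        have := congrFun (congrFun hP'Λ k) j
        simp only [hΛdef, Matrix.mul_diagonal, Matrix.zero_apply] at this
        have hlam : (hSH.eigenvalues j : ℂ) ≠ 0 := by exact_mod_cast hj
        exact (mul_eq_zero.mp this).resolve_right hlam
      rw [hMdiag j hj]
      simp [hzero]
  -- transfer back : trace D = trace (D * P₀)
  have htrD : D.trace = (D * P₀).trace := by
    have h1 : M.trace = D.trace := by
      rw [hMdef, Matrix.trace_mul_cycle, hVV, one_mul]
    have h2 : (M * P').trace = (D * P₀).trace := by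
      have : M * P' = Vᴴ * (D * P₀) * V := by
        rw [hMdef, hP'def]
        simp only [mul_assoc]
        rw [← mul_assoc V Vᴴ, hVV, one_mul]
      rw [this, Matrix.trace_mul_cycle, hVV, one_mul]
    rw [← h1, ← h2, htrM]
  -- finish
  have hεsP : εs * P₀ = -(ε * P₀) := by
    have h := hSP
    rw [hSdef, add_mul] at h
    rw [eq_neg_iff_add_eq_zero, add_comm]
    exact h
  have hDtr : D.trace = ε.trace - εs.trace := by
    rw [hDdef, Matrix.trace_sub]
  have hDPtr : (D * P₀).trace = 2 * (ε * P₀).trace := by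
    rw [hDdef, sub_mul, Matrix.trace_sub, hεsP, Matrix.trace_neg]
    ring
  have key : 2 * (ε * P₀).trace = ε.trace - εs.trace := by
    rw [← hDPtr, ← htrD, hDtr]
  rw [htr, htrs] at key
  have : (ε * P₀).trace = ((ν : ℂ) - (νs : ℂ)) := by
    push_cast at key ⊢
    linear_combination key / 2
  rw [this]
  push_cast
  ring
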